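/- The functional χ_2 restricts to a character of the Lie algebra m_2: Tr(e_2(xy − yx)) = 0 for all x, y ∈ m_2. Moreover χ_2 agrees with χ_1 on m_1: Tr(e_2 u) = Tr(e_1 u) for all u ∈ m_1, so that under the decomposition m_2 = m_1 ⊕ k one has χ_2 = (χ_1, κ) where κ := χ_2|_k. -/

import Mathlib

open Matrix

/-- The boxes of the right-aligned Young diagram of `μ` (0-based: box `⟨r, s⟩`
corresponds to the box in row `r+1`, `s+1`-th from the right end of its row). -/
abbrev Box (k : ℕ) (μ : Fin k → ℕ) := (r : Fin k) × Fin (μ r)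

/-- The nilpotent `e₁` of Jordan type `μ`, sending `b_{r,s} ↦ b_{r,s+1}`. -/
noncomputable def e1 (k : ℕ) (μ : Fin k → ℕ) : Matrix (Box k μ) (Box k μ) ℂ :=
  Matrix.of fun t u => if t.1 = u.1 ∧ t.2.val = u.2.val + 1 then 1 else 0

/-- The nilpotent `e₂ = e₁ + Σ_{s=1}^{μ_j} E_{(i,s),(j,s)}`. -/
noncomputable def e2 (k : ℕ) (μ : Fin k → ℕ) (i j : Fin k) : Matrix (Box k μ) (Box k μ) ℂ :=
  e1 k μ + Matrix.of fun t u => if t.1 = i ∧ u.1 = j ∧ t.2.val = u.2.val then 1 else 0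

/-- `E_m := Σ_{r=i}^{j−m} Σ_{s=1}^{μ_{r+m}} E_{(r+m,s),(r,s)}`. -/
noncomputable def Em (k : ℕ) (μ : Fin k → ℕ) (i j : Fin k) (m : ℕ) :
    Matrix (Box k μ) (Box k μ) ℂ :=
  Matrix.of fun t u =>
    if i ≤ u.1 ∧ t.1 ≤ j ∧ t.1.val = u.1.val + m ∧ t.2.val = u.2.val then 1 else 0

/-- `m₁ := span{E_{t,u} : s_t < s_u}`. -/
noncomputable def m1 (k : ℕ) (μ : Fin k → ℕ) : Submodule ℂ (Matrix (Box k μ) (Box k μ) ℂ) :=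
  Submodule.span ℂ
    {x | ∃ t u : Box k μ, t.2.val < u.2.val ∧ x = Matrix.single t u 1}

/-- `k := span{E_1, …, E_{j−i}}`. -/
noncomputable def fk (k : ℕ) (μ : Fin k → ℕ) (i j : Fin k) :
    Submodule ℂ (Matrix (Box k μ) (Box k μ) ℂ) :=
  Submodule.span ℂ {x | ∃ m : ℕ, 1 ≤ m ∧ m ≤ j.val - i.val ∧ x = Em k μ i j m}

/-- `m₂ := m₁ + k`. -/
noncomputable def m2 (k : ℕ) (μ : Fin k → ℕ) (i j : Fin k) :
    Submodule ℂ (Matrix (Box k μ) (Box k μ) ℂ) :=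
  m1 k μ ⊔ fk k μ i j

/-- The covering partition `λ`. -/
def lam (k : ℕ) (μ : Fin k → ℕ) (i j : Fin k) : Fin k → ℕ :=
  fun r => if r = i then μ i + 1 else if r = j then μ j - 1 else μ r

/-- `χ_a(x) = Tr(e_a x)`. -/
noncomputable def chi (k : ℕ) (μ : Fin k → ℕ) (ea x : Matrix (Box k μ) (Box k μ) ℂ) : ℂ :=
  (ea * x).trace

noncomputable def Fm (k : ℕ) (μ : Fin k → ℕ) (i j : Fin k) : Matrix (Box k μ) (Box k μ) ℂ :=
  Matrix.of fun t u => if t.1 = i ∧ u.1 = j ∧ t.2.val = u.2.val then 1 else 0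

section Aux
variable {k : ℕ} {μ : Fin k → ℕ} {i j : Fin k}

lemma e2_eq : e2 k μ i j = e1 k μ + Fm k μ i j := rfl

lemma e1_apply (t u : Box k μ) :
    e1 k μ t u = if t.1 = u.1 ∧ t.2.val = u.2.val + 1 then 1 else 0 := rfl

lemma Fm_apply (t u : Box k μ) :
    Fm k μ i j t u = if t.1 = i ∧ u.1 = j ∧ t.2.val = u.2.val then 1 else 0 := rfl

lemma Em_apply (m : ℕ) (t u : Box k μ) :
    Em k μ i j m t u =
      if i ≤ u.1 ∧ t.1 ≤ j ∧ t.1.val = u.1.val + m ∧ t.2.val = u.2.val then 1 else 0 := rfl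

lemma Box.ext' {b c : Box k μ} (h1 : b.1 = c.1) (h2 : b.2.val = c.2.val) : b = c := by
  obtain ⟨r, s⟩ := b; obtain ⟨r', s'⟩ := c
  dsimp at h1; subst h1
  exact congrArg (Sigma.mk r) (Fin.ext h2)

lemma trace_std_mul (t u : Box k μ) (M : Matrix (Box k μ) (Box k μ) ℂ) :
    (Matrix.single t u (1:ℂ) * M).trace = M u t := by
  rw [Matrix.trace]
  rw [Finset.sum_eq_single t]
  · simp [Matrix.diag]
  · intro b _ hb
    simpa [Matrix.diag] using Matrix.single_mul_apply_of_ne (c := (1:ℂ)) t u b b hb M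
  · intro h; exact absurd (Finset.mem_univ t) h

lemma trace_mul_std (t u : Box k μ) (M : Matrix (Box k μ) (Box k μ) ℂ) :
    (M * Matrix.single t u (1:ℂ)).trace = M u t := by
  rw [Matrix.trace]
  rw [Finset.sum_eq_single u]
  · simp [Matrix.diag]
  · intro b _ hb
    simpa [Matrix.diag] using Matrix.mul_single_apply_of_ne (c := (1:ℂ)) t u b b hb M
  · intro h; exact absurd (Finset.mem_univ u) h

end Aux

section Entries
variable {k : ℕ} {μ : Fin k → ℕ} {i j : Fin k}

lemma Em_mul_e1 (hanti : Antitone μ) (m : ℕ) (u t : Box k μ) :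
    (Em k μ i j m * e1 k μ) u t =
      if i ≤ t.1 ∧ u.1 ≤ j ∧ u.1.val = t.1.val + m ∧ u.2.val = t.2.val + 1 then 1 else 0 := by
  rw [Matrix.mul_apply]
  by_cases hP : i ≤ t.1 ∧ u.1 ≤ j ∧ u.1.val = t.1.val + m ∧ u.2.val = t.2.val + 1
  · obtain ⟨h1, h2, h3, h4⟩ := hP
    rw [if_pos ⟨h1, h2, h3, h4⟩]
    have htu : t.1 ≤ u.1 := by rw [Fin.le_def]; omega
    have hlt : u.2.val < μ t.1 := lt_of_lt_of_le u.2.isLt (hanti htu)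
    set b₀ : Box k μ := ⟨t.1, ⟨u.2.val, hlt⟩⟩ with hb₀
    refine Finset.sum_eq_single_of_mem b₀ (Finset.mem_univ _) ?_ |>.trans ?_
    · intro b _ hb
      rw [Em_apply, e1_apply]
      by_cases hA : i ≤ b.1 ∧ u.1 ≤ j ∧ u.1.val = b.1.val + m ∧ u.2.val = b.2.val
      · by_cases hB : b.1 = t.1 ∧ b.2.val = t.2.val + 1
        · exact absurd (Box.ext' (c := b₀) hB.1 hA.2.2.2.symm) hb
        · rw [if_neg hB, mul_zero]
      · rw [if_neg hA, zero_mul]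
    · rw [Em_apply, e1_apply, if_pos ⟨h1, h2, h3, rfl⟩, if_pos ⟨rfl, h4⟩, one_mul]
  · rw [if_neg hP]
    refine Finset.sum_eq_zero fun b _ => ?_
    rw [Em_apply, e1_apply]
    by_cases hA : i ≤ b.1 ∧ u.1 ≤ j ∧ u.1.val = b.1.val + m ∧ u.2.val = b.2.val
    · by_cases hB : b.1 = t.1 ∧ b.2.val = t.2.val + 1
      · exact absurd ⟨hB.1 ▸ hA.1, hA.2.1, by omega, by omega⟩ hP
      · rw [if_neg hB, mul_zero]
    · rw [if_neg hA, zero_mul]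

lemma e1_mul_Em (m : ℕ) (u t : Box k μ) :
    (e1 k μ * Em k μ i j m) u t =
      if i ≤ t.1 ∧ u.1 ≤ j ∧ u.1.val = t.1.val + m ∧ u.2.val = t.2.val + 1 then 1 else 0 := by
  rw [Matrix.mul_apply]
  by_cases hP : i ≤ t.1 ∧ u.1 ≤ j ∧ u.1.val = t.1.val + m ∧ u.2.val = t.2.val + 1
  · obtain ⟨h1, h2, h3, h4⟩ := hP
    have hlt : t.2.val < μ u.1 := by have := u.2.isLt; omega
    set b₀ : Box k μ := ⟨u.1, ⟨t.2.val, hlt⟩⟩ with hb₀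
    refine Finset.sum_eq_single_of_mem b₀ (Finset.mem_univ _) ?_ |>.trans ?_
    · intro b _ hb
      rw [e1_apply, Em_apply]
      by_cases hA : u.1 = b.1 ∧ u.2.val = b.2.val + 1
      · by_cases hB : i ≤ t.1 ∧ b.1 ≤ j ∧ b.1.val = t.1.val + m ∧ b.2.val = t.2.val
        · exact absurd (Box.ext' (c := b₀) hA.1.symm hB.2.2.2) hb
        · rw [if_neg hB, mul_zero]
      · rw [if_neg hA, zero_mul]
    · rw [e1_apply, Em_apply, if_pos ⟨rfl, h4⟩, if_pos ⟨h1, h2, h3, rfl⟩, one_mul,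
        if_pos ⟨h1, h2, h3, h4⟩]
  · rw [if_neg hP]
    refine Finset.sum_eq_zero fun b _ => ?_
    rw [e1_apply, Em_apply]
    by_cases hA : u.1 = b.1 ∧ u.2.val = b.2.val + 1
    · by_cases hB : i ≤ t.1 ∧ b.1 ≤ j ∧ b.1.val = t.1.val + m ∧ b.2.val = t.2.val
      · exact absurd ⟨hB.1, hA.1 ▸ hB.2.1, by omega, by omega⟩ hP
      · rw [if_neg hB, mul_zero]
    · rw [if_neg hA, zero_mul]

lemma Em_mul_Fm (m : ℕ) (u t : Box k μ) (hs : u.2.val ≠ t.2.val) :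
    (Em k μ i j m * Fm k μ i j) u t = 0 := by
  rw [Matrix.mul_apply]
  refine Finset.sum_eq_zero fun b _ => ?_
  rw [Em_apply, Fm_apply]
  by_cases hA : i ≤ b.1 ∧ u.1 ≤ j ∧ u.1.val = b.1.val + m ∧ u.2.val = b.2.val
  · by_cases hB : b.1 = i ∧ t.1 = j ∧ b.2.val = t.2.val
    · exact absurd (hA.2.2.2.trans hB.2.2) hs
    · rw [if_neg hB, mul_zero]
  · rw [if_neg hA, zero_mul]

lemma Fm_mul_Em (m : ℕ) (u t : Box k μ) (hs : u.2.val ≠ t.2.val) :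
    (Fm k μ i j * Em k μ i j m) u t = 0 := by
  rw [Matrix.mul_apply]
  refine Finset.sum_eq_zero fun b _ => ?_
  rw [Fm_apply, Em_apply]
  by_cases hA : u.1 = i ∧ b.1 = j ∧ u.2.val = b.2.val
  · by_cases hB : i ≤ t.1 ∧ b.1 ≤ j ∧ b.1.val = t.1.val + m ∧ b.2.val = t.2.val
    · exact absurd (hA.2.2.trans hB.2.2.2) hs
    · rw [if_neg hB, mul_zero]
  · rw [if_neg hA, zero_mul]

lemma Em_mul_Em_ne (m m' : ℕ) (a c : Box k μ) (hs : a.2.val ≠ c.2.val) :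
    (Em k μ i j m * Em k μ i j m') a c = 0 := by
  rw [Matrix.mul_apply]
  refine Finset.sum_eq_zero fun b _ => ?_
  rw [Em_apply, Em_apply]
  by_cases hA : i ≤ b.1 ∧ a.1 ≤ j ∧ a.1.val = b.1.val + m ∧ a.2.val = b.2.val
  · by_cases hB : i ≤ c.1 ∧ b.1 ≤ j ∧ b.1.val = c.1.val + m' ∧ b.2.val = c.2.val
    · exact absurd (hA.2.2.2.trans hB.2.2.2) hs
    · rw [if_neg hB, mul_zero]
  · rw [if_neg hA, zero_mul]

lemma Em_mul_Em_diag (hanti : Antitone μ) (m m' : ℕ) (a c : Box k μ)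
    (hc : c.1 = i) (ha : a.1 = j) (hs : a.2.val = c.2.val) :
    (Em k μ i j m * Em k μ i j m') a c = if j.val = i.val + (m + m') then 1 else 0 := by
  rw [Matrix.mul_apply]
  by_cases hP : j.val = i.val + (m + m')
  · rw [if_pos hP]
    have hb1 : i.val + m' < k := by have := j.isLt; omega
    have hrj : (⟨i.val + m', hb1⟩ : Fin k) ≤ j := by rw [Fin.le_def]; dsimp; omega
    have hlt : c.2.val < μ (⟨i.val + m', hb1⟩ : Fin k) := by
      have h1 : c.2.val < μ a.1 := hs ▸ a.2.isLt
      calc c.2.val < μ j := by rw [← ha]; exact h1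
        _ ≤ μ _ := hanti hrj
    set b₀ : Box k μ := ⟨⟨i.val + m', hb1⟩, ⟨c.2.val, hlt⟩⟩ with hb₀
    refine Finset.sum_eq_single_of_mem b₀ (Finset.mem_univ _) ?_ |>.trans ?_
    · intro b _ hb
      rw [Em_apply, Em_apply]
      by_cases hA : i ≤ b.1 ∧ a.1 ≤ j ∧ a.1.val = b.1.val + m ∧ a.2.val = b.2.val
      · by_cases hB : i ≤ c.1 ∧ b.1 ≤ j ∧ b.1.val = c.1.val + m' ∧ b.2.val = c.2.val
        · refine absurd (Box.ext' (c := b₀) ?_ hB.2.2.2) hb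
          apply Fin.ext
          have h2 := hB.2.2.1
          rw [hc] at h2
          simpa using h2
        · rw [if_neg hB, mul_zero]
      · rw [if_neg hA, zero_mul]
    · rw [Em_apply, Em_apply]
      have c1 : i ≤ b₀.1 := by rw [Fin.le_def]; show i.val ≤ i.val + m'; omega
      have c2 : a.1.val = b₀.1.val + m := by rw [ha]; show j.val = (i.val + m') + m; omega
      have c3 : b₀.1.val = c.1.val + m' := by rw [hc]
      rw [if_pos ⟨c1, ha.le, c2, hs⟩, if_pos ⟨hc ▸ le_refl i, hrj, c3, rfl⟩, one_mul]
  · rw [if_neg hP]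
    refine Finset.sum_eq_zero fun b _ => ?_
    rw [Em_apply, Em_apply]
    by_cases hA : i ≤ b.1 ∧ a.1 ≤ j ∧ a.1.val = b.1.val + m ∧ a.2.val = b.2.val
    · by_cases hB : i ≤ c.1 ∧ b.1 ≤ j ∧ b.1.val = c.1.val + m' ∧ b.2.val = c.2.val
      · exfalso
        have h1 := hA.2.2.1; have h2 := hB.2.2.1
        rw [ha] at h1; rw [hc] at h2; omega
      · rw [if_neg hB, mul_zero]
    · rw [if_neg hA, zero_mul]

end Entries

section Traces
variable {k : ℕ} {μ : Fin k → ℕ} {i j : Fin k}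

lemma comm_entry (hanti : Antitone μ) (m : ℕ) (u t : Box k μ) (h : t.2.val < u.2.val) :
    (Em k μ i j m * e2 k μ i j) u t = (e2 k μ i j * Em k μ i j m) u t := by
  rw [e2_eq, mul_add, add_mul, Matrix.add_apply, Matrix.add_apply,
    Em_mul_e1 hanti, e1_mul_Em, Em_mul_Fm m u t (by omega), Fm_mul_Em m u t (by omega)]

lemma caseB (hanti : Antitone μ) (m : ℕ) (t u : Box k μ) (h : t.2.val < u.2.val) :
    (e2 k μ i j * (Matrix.single t u 1 * Em k μ i j m
      - Em k μ i j m * Matrix.single t u 1)).trace = 0 := by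
  rw [mul_sub, Matrix.trace_sub]
  have h1 : (e2 k μ i j * (Matrix.single t u 1 * Em k μ i j m)).trace
      = (Em k μ i j m * e2 k μ i j) u t := by
    rw [Matrix.trace_mul_comm, Matrix.mul_assoc, trace_std_mul]
  have h2 : (e2 k μ i j * (Em k μ i j m * Matrix.single t u 1)).trace
      = (e2 k μ i j * Em k μ i j m) u t := by
    rw [← Matrix.mul_assoc, trace_mul_std]
  rw [h1, h2, comm_entry hanti m u t h, sub_self]

lemma caseC (hanti : Antitone μ) (m m' : ℕ) :
    (e2 k μ i j * (Em k μ i j m * Em k μ i j m'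
      - Em k μ i j m' * Em k μ i j m)).trace = 0 := by
  have hE1 : ∀ p q : ℕ, (e1 k μ * (Em k μ i j p * Em k μ i j q)).trace = 0 := by
    intro p q
    rw [Matrix.trace]
    refine Finset.sum_eq_zero fun c _ => ?_
    rw [Matrix.diag_apply, Matrix.mul_apply]
    refine Finset.sum_eq_zero fun a _ => ?_
    by_cases hc : c.1 = a.1 ∧ c.2.val = a.2.val + 1
    · rw [Em_mul_Em_ne p q a c (by omega), mul_zero]
    · rw [e1_apply, if_neg hc, zero_mul]
  have hF : (Fm k μ i j * (Em k μ i j m * Em k μ i j m')).trace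
      = (Fm k μ i j * (Em k μ i j m' * Em k μ i j m)).trace := by
    rw [Matrix.trace, Matrix.trace]
    refine Finset.sum_congr rfl fun c _ => ?_
    rw [Matrix.diag_apply, Matrix.diag_apply, Matrix.mul_apply, Matrix.mul_apply]
    refine Finset.sum_congr rfl fun a _ => ?_
    by_cases hc : c.1 = i ∧ a.1 = j ∧ c.2.val = a.2.val
    · rw [Em_mul_Em_diag hanti m m' a c hc.1 hc.2.1 hc.2.2.symm,
        Em_mul_Em_diag hanti m' m a c hc.1 hc.2.1 hc.2.2.symm, Nat.add_comm m' m]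
    · rw [Fm_apply, if_neg hc, zero_mul, zero_mul]
  rw [mul_sub, Matrix.trace_sub, e2_eq, add_mul, add_mul, Matrix.trace_add, Matrix.trace_add,
    hE1, hE1, hF, zero_add, sub_self]

lemma traceA_key (t u t' u' : Box k μ) (h1 : t.2.val < u.2.val) (h2 : t'.2.val < u'.2.val) :
    (e2 k μ i j * (Matrix.single t u 1 * Matrix.single t' u' 1)).trace = 0 := by
  by_cases h : u = t'
  · subst h
    rw [Matrix.single_mul_single_same, one_mul, trace_mul_std]
    have hn1 : ¬(u'.1 = t.1 ∧ u'.2.val = t.2.val + 1) := by rintro ⟨_, h3⟩; omega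
    have hn2 : ¬(u'.1 = i ∧ t.1 = j ∧ u'.2.val = t.2.val) := by rintro ⟨_, _, h3⟩; omega
    rw [e2_eq, Matrix.add_apply, e1_apply, Fm_apply, if_neg hn1, if_neg hn2, add_zero]
  · rw [show Matrix.single t u (1:ℂ) * Matrix.single t' u' 1 = 0 from
        Matrix.single_mul_single_of_ne _ _ _ _ h _, mul_zero, Matrix.trace_zero]

lemma part2gen (t u : Box k μ) (h : t.2.val < u.2.val) :
    (e2 k μ i j * Matrix.single t u (1:ℂ)).trace
      = (e1 k μ * Matrix.single t u 1).trace := by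
  rw [trace_mul_std, trace_mul_std, e2_eq, Matrix.add_apply, Fm_apply, if_neg, add_zero]
  rintro ⟨_, _, h3⟩; omega

end Traces

/-- `χ₂` restricts to a character of `m₂`, and `χ₂` agrees with `χ₁` on
`m₁`, so that under `m₂ = m₁ ⊕ k` one has `χ₂ = (χ₁, κ)` with `κ := χ₂|_k`. -/
theorem stmt10
    (k : ℕ) (n : ℕ) (μ : Fin k → ℕ)
    (hpos : ∀ r, 0 < μ r) (hanti : Antitone μ)
    (hn : ∑ r : Fin k, μ r = n)
    (i j : Fin k) (hij : i < j)
    (hi : ∀ r, r < i → μ i < μ r)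
    (hj : ∀ r, j < r → μ r < μ j)
    (hcase : (j : ℕ) = (i : ℕ) + 1 ∨ μ i = μ j)
    :
    (∀ x ∈ m2 k μ i j, ∀ y ∈ m2 k μ i j,
        (e2 k μ i j * (x * y - y * x)).trace = 0)
    ∧ (∀ u ∈ m1 k μ, (e2 k μ i j * u).trace = (e1 k μ * u).trace) := by
  classical
  have hm2 : m2 k μ i j = Submodule.span ℂ
      ({x | ∃ t u : Box k μ, t.2.val < u.2.val ∧ x = Matrix.single t u 1}
        ∪ {x | ∃ m : ℕ, 1 ≤ m ∧ m ≤ j.val - i.val ∧ x = Em k μ i j m}) := by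
    rw [m2, m1, fk, Submodule.span_union]
  have base : ∀ X ∈ ({x | ∃ t u : Box k μ, t.2.val < u.2.val ∧ x = Matrix.single t u 1}
        ∪ {x | ∃ m : ℕ, 1 ≤ m ∧ m ≤ j.val - i.val ∧ x = Em k μ i j m}),
      ∀ Y ∈ ({x | ∃ t u : Box k μ, t.2.val < u.2.val ∧ x = Matrix.single t u 1}
        ∪ {x | ∃ m : ℕ, 1 ≤ m ∧ m ≤ j.val - i.val ∧ x = Em k μ i j m}),
      (e2 k μ i j * (X * Y - Y * X)).trace = 0 := by
    rintro X (⟨t, u, h1, rfl⟩ | ⟨m, -, -, rfl⟩) Y (⟨t', u', h2, rfl⟩ | ⟨m', -, -, rfl⟩)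
    · rw [mul_sub, Matrix.trace_sub, traceA_key t u t' u' h1 h2,
        traceA_key t' u' t u h2 h1, sub_self]
    · exact caseB hanti m' t u h1
    · rw [show Em k μ i j m * Matrix.single t' u' 1
          - Matrix.single t' u' 1 * Em k μ i j m
          = -(Matrix.single t' u' 1 * Em k μ i j m
              - Em k μ i j m * Matrix.single t' u' 1) by abel,
        mul_neg, Matrix.trace_neg, caseB hanti m t' u' h2, neg_zero]
    · exact caseC hanti m m'
  constructor
  · intro x hx y hy
    rw [hm2] at hx hy
    refine Submodule.span_induction
      (p := fun x _ => (e2 k μ i j * (x * y - y * x)).trace = 0) ?_ ?_ ?_ ?_ hx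
    · intro X hX
      refine Submodule.span_induction
        (p := fun y _ => (e2 k μ i j * (X * y - y * X)).trace = 0) ?_ ?_ ?_ ?_ hy
      · intro Y hY; exact base X hX Y hY
      · simp
      · intro y1 y2 _ _ p1 p2
        rw [show X * (y1 + y2) - (y1 + y2) * X
            = (X * y1 - y1 * X) + (X * y2 - y2 * X) by rw [mul_add, add_mul]; abel,
          mul_add, Matrix.trace_add, p1, p2, add_zero]
      · intro c y1 _ p1
        rw [show X * (c • y1) - (c • y1) * X = c • (X * y1 - y1 * X) by
            rw [mul_smul_comm, smul_mul_assoc, smul_sub],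
          mul_smul_comm, Matrix.trace_smul, p1, smul_zero]
    · simp
    · intro x1 x2 _ _ p1 p2
      rw [show (x1 + x2) * y - y * (x1 + x2)
          = (x1 * y - y * x1) + (x2 * y - y * x2) by rw [mul_add, add_mul]; abel,
        mul_add, Matrix.trace_add, p1, p2, add_zero]
    · intro c x1 _ p1
      rw [show (c • x1) * y - y * (c • x1) = c • (x1 * y - y * x1) by
          rw [mul_smul_comm, smul_mul_assoc, smul_sub],
        mul_smul_comm, Matrix.trace_smul, p1, smul_zero]
  · intro u hu
    rw [m1] at hu
    refine Submodule.span_induction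
      (p := fun u _ => (e2 k μ i j * u).trace = (e1 k μ * u).trace) ?_ ?_ ?_ ?_ hu
    · rintro X ⟨t, u', h1, rfl⟩; exact part2gen t u' h1
    · simp
    · intro a b _ _ p1 p2
      rw [mul_add, mul_add, Matrix.trace_add, Matrix.trace_add, p1, p2]
    · intro c a _ p1
      rw [mul_smul_comm, mul_smul_comm, Matrix.trace_smul, Matrix.trace_smul, p1]
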